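/- Let λ > 0, V_∞ ∈ (0,1), C > 0, and set α := 2V_∞/λ, β := 2(1−V_∞)/λ. Define f(v) := C·v^{α−1}(1−v)^{β−1} for v ∈ (0,1). Then f is differentiable on (0,1) and for every v ∈ (0,1): (λ/2)·d/dv[v(1−v)·f(v)] = (V_∞ − v)·f(v). In other words, the beta-type density f is a stationary solution of the Fokker–Planck equation ∂_t f = (λ/2)∂_v²(v(1−v)f) − ∂_v[(V_∞ − v)f]. -/

import Mathlib

open Real

/-- The beta-type density `f(v) = C v^{α−1}(1−v)^{β−1}` with `α = 2V_∞/λ`,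
`β = 2(1−V_∞)/λ`, `λ > 0`, `V_∞ ∈ (0,1)`, `C > 0`, is differentiable on `(0,1)` and
satisfies the stationary Fokker–Planck equation
`(λ/2) d/dv[v(1−v)f(v)] = (V_∞ − v)f(v)` on `(0,1)`. -/
theorem beta_density_stationary_FokkerPlanck
    (lam Vinf C : ℝ) (hlam : 0 < lam) (hV : Vinf ∈ Set.Ioo (0:ℝ) 1) (hC : 0 < C)
    (f : ℝ → ℝ)
    (hf : ∀ v, f v =
      C * v ^ (2 * Vinf / lam - 1) * (1 - v) ^ (2 * (1 - Vinf) / lam - 1)) :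
    DifferentiableOn ℝ f (Set.Ioo 0 1) ∧
    ∀ v ∈ Set.Ioo (0:ℝ) 1,
      lam / 2 * deriv (fun w => w * (1 - w) * f w) v = (Vinf - v) * f v := by
  set α : ℝ := 2 * Vinf / lam with hα
  set β : ℝ := 2 * (1 - Vinf) / lam with hβ
  have key : ∀ v ∈ Set.Ioo (0:ℝ) 1,
      HasDerivAt (fun w => C * w ^ (α - 1) * (1 - w) ^ (β - 1))
        (C * ((α - 1) * v ^ (α - 1 - 1)) * (1 - v) ^ (β - 1)
          + C * v ^ (α - 1) * ((β - 1) * (1 - v) ^ (β - 1 - 1) * (-1))) v := by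
    intro v hv
    have hv0 : (0:ℝ) < v := hv.1
    have hv1 : (0:ℝ) < 1 - v := by linarith [hv.2]
    have h1 : HasDerivAt (fun w : ℝ => w ^ (α - 1)) ((α - 1) * v ^ (α - 1 - 1)) v :=
      Real.hasDerivAt_rpow_const (Or.inl hv0.ne')
    have h2 : HasDerivAt (fun w : ℝ => (1 - w) ^ (β - 1))
        ((β - 1) * (1 - v) ^ (β - 1 - 1) * (-1)) v := by
      have hlin : HasDerivAt (fun w : ℝ => 1 - w) (-1) v := by
        simpa using (hasDerivAt_id v).const_sub 1
      have := (Real.hasDerivAt_rpow_const (p := β - 1) (Or.inl hv1.ne')).comp v hlin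
      simpa [mul_comm, mul_assoc, Function.comp_def] using this
    exact (h1.const_mul C).mul h2
  constructor
  · intro v hv
    have hd := (key v hv).differentiableAt
    have hfeq : f = fun w => C * w ^ (α - 1) * (1 - w) ^ (β - 1) := funext fun w => hf w
    rw [hfeq]
    exact hd.differentiableWithinAt
  · intro v hv
    have hv0 : (0:ℝ) < v := hv.1
    have hv1 : (0:ℝ) < 1 - v := by linarith [hv.2]
    have heq : (fun w => w * (1 - w) * f w) =ᶠ[nhds v]
        (fun w => C * w ^ α * (1 - w) ^ β) := by
      filter_upwards [(isOpen_Ioo : IsOpen (Set.Ioo (0:ℝ) 1)).mem_nhds hv] with w hw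
      have hw0 : (0:ℝ) < w := hw.1
      have hw1 : (0:ℝ) < 1 - w := by linarith [hw.2]
      rw [hf w]
      have e1 : w ^ α = w ^ (α - 1) * w := by
        rw [← Real.rpow_add_one hw0.ne' (α - 1)]; ring_nf
      have e2 : (1 - w) ^ β = (1 - w) ^ (β - 1) * (1 - w) := by
        rw [← Real.rpow_add_one hw1.ne' (β - 1)]; ring_nf
      rw [e1, e2]; ring
    -- derivative of C * w^α * (1-w)^β
    have hαd : HasDerivAt (fun w : ℝ => C * w ^ α * (1 - w) ^ β)
        (C * (α * v ^ (α - 1)) * (1 - v) ^ β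
          + C * v ^ α * (β * (1 - v) ^ (β - 1) * (-1))) v := by
      have h1 : HasDerivAt (fun w : ℝ => w ^ α) (α * v ^ (α - 1)) v :=
        Real.hasDerivAt_rpow_const (Or.inl hv0.ne')
      have h2 : HasDerivAt (fun w : ℝ => (1 - w) ^ β)
          (β * (1 - v) ^ (β - 1) * (-1)) v := by
        have hlin : HasDerivAt (fun w : ℝ => 1 - w) (-1) v := by
          simpa using (hasDerivAt_id v).const_sub 1
        have := (Real.hasDerivAt_rpow_const (p := β) (Or.inl hv1.ne')).comp v hlin
        simpa [mul_comm, mul_assoc, Function.comp_def] using this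
      exact (h1.const_mul C).mul h2
    rw [Filter.EventuallyEq.deriv_eq heq, hαd.deriv]
    rw [hf v]
    have e1 : v ^ α = v ^ (α - 1) * v := by
      rw [← Real.rpow_add_one hv0.ne' (α - 1)]; ring_nf
    have e2 : (1 - v) ^ β = (1 - v) ^ (β - 1) * (1 - v) := by
      rw [← Real.rpow_add_one hv1.ne' (β - 1)]; ring_nf
    rw [e1, e2]
    have hla : lam / 2 * α = Vinf := by
      rw [hα]; field_simp
    have hlb : lam / 2 * β = 1 - Vinf := by
      rw [hβ]; field_simp
    linear_combination (C * (v ^ (α - 1)) * ((1 - v) ^ (β - 1)) * (1 - v)) * hla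
      - (C * (v ^ (α - 1)) * ((1 - v) ^ (β - 1)) * v) * hlb
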